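/- For $1 \le i \le n$ and $n \ge 2$, we have $\frac{2\binom{2n-3}{n-i-1}}{\binom{2n}{n-i+1}} - \frac{2\binom{2n-3}{n-i-2}}{\binom{2n}{n-i}} = \frac{(n-i)(n+3i-1)}{2n(2n-1)(n-1)}$, which gives the down-hook sum $H^{\downarrow}_i(n)$ of two-point correlations in the $B$-MultiTASEP. -/

import Mathlib

/-- Binomial coefficient `C(m, k)` with an integer lower index, which is `0`
when `k < 0`. -/
def binZ (m : ℕ) (k : ℤ) : ℕ := if 0 ≤ k then m.choose k.toNat else 0

set_option linter.unusedTactic false in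
set_option maxHeartbeats 1600000 in
/-- The down-hook sum of two-point correlations in the `B`-MultiTASEP:
`H↓_i(n) = ⟨1,1̄⟩_{n,i-1} - ⟨1,1̄⟩_{n,i}
        = 2C(2n-3, n-i-1)/C(2n, n-i+1) - 2C(2n-3, n-i-2)/C(2n, n-i)
        = (n-i)(n+3i-1)/(2n(2n-1)(n-1))` for `1 ≤ i ≤ n`, `n ≥ 2`. -/
theorem B_down_hook (n i : ℕ) (hn : 2 ≤ n) (hi : 1 ≤ i) (hin : i ≤ n) :
    2 * (binZ (2 * n - 3) ((n : ℤ) - i - 1) : ℚ) / ((2 * n).choose (n - i + 1) : ℚ)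
        - 2 * (binZ (2 * n - 3) ((n : ℤ) - i - 2) : ℚ) / ((2 * n).choose (n - i) : ℚ)
      = ((n : ℚ) - i) * ((n : ℚ) + 3 * i - 1) / (2 * n * (2 * n - 1) * (n - 1)) := by
  rcases Nat.lt_or_ge (n - i) 2 with hk | hk
  · interval_cases h : n - i
    · -- i = n
      have hni : i = n := by omega
      subst hni
      have e1 : ¬ (0 : ℤ) ≤ (i : ℤ) - i - 1 := by omega
      have e2 : ¬ (0 : ℤ) ≤ (i : ℤ) - i - 2 := by omega
      simp [binZ, e1, e2]
    · -- n = i + 1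
      have hni : n = i + 1 := by omega
      subst hni
      have e1 : ((i : ℤ) + 1 - i - 1) = ((0 : ℕ) : ℤ) := by push_cast; ring
      have e2 : ¬ (0 : ℤ) ≤ ((i:ℤ) + 1) - i - 2 := by omega
      rw [show ((i+1 : ℕ) : ℤ) = (i : ℤ) + 1 by push_cast; ring] at *
      simp only [binZ, e1, if_neg e2]
      norm_num
      rw [Nat.cast_choose_two]
      have hpos : ((2 * (i+1) : ℕ) : ℚ) ≠ 0 := by positivity
      have hpos2 : ((2 * (i+1) : ℕ) : ℚ) - 1 ≠ 0 := by
        push_cast; intro h; nlinarith [(Nat.cast_nonneg i : (0:ℚ) ≤ i)]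
      have hi0 : (i : ℚ) ≠ 0 := Nat.cast_ne_zero.mpr (by omega)
      have hq : (2 : ℚ) + (i:ℚ) * 6 + (i:ℚ) ^ 2 * 4 ≠ 0 := by positivity
      have hq2 : (i:ℚ) * 2 + (i:ℚ) ^ 2 * 6 + (i:ℚ) ^ 3 * 4 ≠ 0 := by
        have h2 : (i:ℚ) * 2 + (i:ℚ) ^ 2 * 6 + (i:ℚ) ^ 3 * 4
            = (i:ℚ) * ((2 : ℚ) + (i:ℚ) * 6 + (i:ℚ) ^ 2 * 4) := by ring
        rw [h2]; exact mul_ne_zero hi0 hq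
      push_cast
      field_simp
      have h0 : (0:ℚ) ≤ (i:ℚ) := Nat.cast_nonneg i
      have d1 : 2 * ((i:ℚ) + 1) * (2 * ((i:ℚ) + 1) - 1) ≠ 0 := by nlinarith
      have d2 : 2 * ((i:ℚ) + 1) * (2 * ((i:ℚ) + 1) - 1) * (i:ℚ) ≠ 0 :=
        mul_ne_zero d1 hi0
      congr 1
      ring
  · -- n - i ≥ 2
    obtain ⟨j, hj⟩ : ∃ j, n = i + j + 2 := ⟨n - i - 2, by omega⟩
    subst hj
    have b1 : binZ (2*i+2*j+1) (((i+j+2 : ℕ) : ℤ) - i - 1) = (2*i+2*j+1).choose (j+1) := by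
      have e : (((i+j+2 : ℕ) : ℤ) - i - 1) = ((j+1 : ℕ) : ℤ) := by push_cast; ring
      rw [e, binZ, if_pos (Int.natCast_nonneg _)]; simp
    have b2 : binZ (2*i+2*j+1) (((i+j+2 : ℕ) : ℤ) - i - 2) = (2*i+2*j+1).choose j := by
      have e : (((i+j+2 : ℕ) : ℤ) - i - 2) = ((j : ℕ) : ℤ) := by push_cast; ring
      rw [e, binZ, if_pos (Int.natCast_nonneg _)]; simp
    rw [show 2*(i+j+2) - 3 = 2*i+2*j+1 by omega,
        show 2*(i+j+2) = 2*i+2*j+4 by omega,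
        show (i+j+2) - i + 1 = j+3 by omega,
        show (i+j+2) - i = j+2 by omega, b1, b2,
        Nat.cast_choose ℚ (show j+3 ≤ 2*i+2*j+4 by omega),
        Nat.cast_choose ℚ (show j+2 ≤ 2*i+2*j+4 by omega),
        Nat.cast_choose ℚ (show j+1 ≤ 2*i+2*j+1 by omega),
        Nat.cast_choose ℚ (show j ≤ 2*i+2*j+1 by omega),
        show 2*i+2*j+4 - (j+3) = 2*i+j+1 by omega,
        show 2*i+2*j+4 - (j+2) = 2*i+j+2 by omega,
        show 2*i+2*j+1 - (j+1) = 2*i+j by omega,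
        show 2*i+2*j+1 - j = 2*i+j+1 by omega]
    have f1 : (Nat.factorial ((2*i+2*j+4)) : ℚ)
        = (2*(i:ℚ)+2*j+4)*(2*(i:ℚ)+2*j+3)*(2*(i:ℚ)+2*j+2)*(Nat.factorial ((2*i+2*j+1)) : ℚ) := by
      rw [show 2*i+2*j+4 = (2*i+2*j+1)+1+1+1 by omega]
      simp [Nat.factorial_succ]; push_cast; ring
    have f2 : (Nat.factorial ((j+3)) : ℚ) = ((j:ℚ)+3)*((j:ℚ)+2)*((j:ℚ)+1)*(Nat.factorial (j) : ℚ) := by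
      rw [show j+3 = j+1+1+1 by omega]
      simp [Nat.factorial_succ]; push_cast; ring
    have f3 : (Nat.factorial ((j+2)) : ℚ) = ((j:ℚ)+2)*((j:ℚ)+1)*(Nat.factorial (j) : ℚ) := by
      rw [show j+2 = j+1+1 by omega]
      simp [Nat.factorial_succ]; push_cast; ring
    have f4 : (Nat.factorial ((j+1)) : ℚ) = ((j:ℚ)+1)*(Nat.factorial (j) : ℚ) := by
      simp [Nat.factorial_succ]
    have f5 : (Nat.factorial ((2*i+j+2)) : ℚ)
        = (2*(i:ℚ)+j+2)*(2*(i:ℚ)+j+1)*(Nat.factorial ((2*i+j)) : ℚ) := by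
      rw [show 2*i+j+2 = (2*i+j)+1+1 by omega]
      simp [Nat.factorial_succ]; push_cast; ring
    have f6 : (Nat.factorial ((2*i+j+1)) : ℚ) = (2*(i:ℚ)+j+1)*(Nat.factorial ((2*i+j)) : ℚ) := by
      rw [show 2*i+j+1 = (2*i+j)+1 by omega]
      simp [Nat.factorial_succ]
    rw [f1, f2, f3, f4, f5, f6]
    have h0i : (0:ℚ) ≤ (i:ℚ) := Nat.cast_nonneg i
    have h0j : (0:ℚ) ≤ (j:ℚ) := Nat.cast_nonneg j
    have nz1 : (Nat.factorial (j) : ℚ) ≠ 0 := Nat.cast_ne_zero.mpr (Nat.factorial_ne_zero j)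
    have nz2 : (Nat.factorial ((2*i+j)) : ℚ) ≠ 0 := Nat.cast_ne_zero.mpr (Nat.factorial_ne_zero _)
    have nz3 : (Nat.factorial ((2*i+2*j+1)) : ℚ) ≠ 0 := Nat.cast_ne_zero.mpr (Nat.factorial_ne_zero _)
    push_cast
    have d1 : 2*(i:ℚ)+2*j+4 > 0 := by positivity
    have d2 : 2*(i:ℚ)+2*j+3 > 0 := by positivity
    have d3 : 2*(i:ℚ)+2*j+2 > 0 := by positivity
    have d4 : (j:ℚ)+3 > 0 := by positivity
    have d5 : (j:ℚ)+2 > 0 := by positivity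
    have d6 : (j:ℚ)+1 > 0 := by positivity
    have d7 : 2*(i:ℚ)+j+2 > 0 := by positivity
    have d8 : 2*(i:ℚ)+j+1 > 0 := by positivity
    have d9 : (i:ℚ)+j+2 > 0 := by positivity
    have d10 : 2*((i:ℚ)+j+2) - 1 > 0 := by linarith
    have d11 : (i:ℚ)+j+2 - 1 > 0 := by linarith
    field_simp
    ring
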